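/- arXiv:1704.05339 — 2 statements merged into one kernel-verified Lean document; each statement's English description precedes it below -/
import Mathlib

section
/- Let u : B₁ → ℝᵈ be measurable and satisfy (u(x)−u(y))·(x−y) ≥ −|x−y|² for a.e. x, y ∈ B₁. Then for a.e. x₀ ∈ B_{3/4}, |u(x₀)| ≤ C(d) ( ∫_{B₁} |u|² )^{1/(d+2)} + C(d) ( ∫_{B₁} |u|² )^{1/2}, and in particular if ∫_{B₁}|u|² ≤ 1 then |u(x₀)| ≤ C(d) ( ∫_{B₁} |u|² )^{1/(d+2)}. -/
open MeasureTheory Metric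

noncomputable section

def Cd (d : ℕ) (ω : ℝ) : ℝ := 2^(d+1)/ω + 2*16^d/ω + 18

lemma Cd_pos (d : ℕ) {ω : ℝ} (hω : 0 < ω) : 0 < Cd d ω := by
  have h1 : (0:ℝ) ≤ 2^(d+1)/ω := div_nonneg (by positivity) hω.le
  have h2 : (0:ℝ) ≤ 2*16^d/ω := div_nonneg (by positivity) hω.le
  unfold Cd; linarith

lemma choice_lemma (d : ℕ) (hd : 1 ≤ d) {ω A N : ℝ} (hω : 0 < ω) (hA : 0 ≤ A)
    (hN : 0 ≤ N)
    (M : ∀ r ε : ℝ, 0 < r → r ≤ 1/8 → 0 < ε →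
      N ≤ 2*A/(ε*((r/2)^d*ω)) + 2*ε + 8*r) :
    (N ≤ Cd d ω * A ^ ((1:ℝ)/((d:ℝ)+2)) + Cd d ω * A ^ ((1:ℝ)/2)) ∧
    (A ≤ 1 → N ≤ Cd d ω * A ^ ((1:ℝ)/((d:ℝ)+2))) := by
  have h1 : (0:ℝ) ≤ 2^(d+1)/ω := div_nonneg (by positivity) hω.le
  have h2 : (0:ℝ) ≤ 2*16^d/ω := div_nonneg (by positivity) hω.le
  rcases hA.eq_or_lt with h0 | hApos
  · obtain rfl : A = 0 := h0.symm
    have hN0 : N ≤ 0 := by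
      by_contra hc
      push_neg at hc
      set δ := min (1/8 : ℝ) (N/20) with hδdef
      have hδpos : 0 < δ := lt_min (by norm_num) (by linarith)
      have hδ8 : δ ≤ 1/8 := min_le_left _ _
      have hδN : δ ≤ N/20 := min_le_right _ _
      have hM := M δ δ hδpos hδ8 hδpos
      rw [mul_zero, zero_div] at hM
      linarith
    have e1 : (0:ℝ) ^ ((1:ℝ)/((d:ℝ)+2)) = 0 := Real.zero_rpow (by positivity)
    have e2 : (0:ℝ) ^ ((1:ℝ)/2) = 0 := Real.zero_rpow (by norm_num)
    rw [e1, e2]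
    constructor
    · simpa using hN0
    · intro _; simpa using hN0
  · set s := A ^ ((1:ℝ)/((d:ℝ)+2)) with hsdef
    have hs : 0 < s := Real.rpow_pos_of_pos hApos _
    have hd2 : (0:ℝ) < (d:ℝ)+2 := by positivity
    have hAs : s ^ (d+2) = A := by
      rw [hsdef, ← Real.rpow_natCast (A ^ ((1:ℝ)/((d:ℝ)+2))) (d+2), ← Real.rpow_mul hA]
      push_cast
      rw [one_div, inv_mul_cancel₀ hd2.ne', Real.rpow_one]
    rcases le_or_gt s (1/8) with hs8 | hs8
    · have hM := M s s hs hs8 hs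
      have hterm : 2*A/(s*((s/2)^d*ω)) = 2^(d+1)/ω * s := by
        rw [← hAs, div_pow]
        field_simp
        ring
      rw [hterm] at hM
      have hCge : 2^(d+1)/ω + 10 ≤ Cd d ω := by unfold Cd; linarith
      have hNs : N ≤ Cd d ω * s := by nlinarith [mul_le_mul_of_nonneg_right hCge hs.le]
      have hA12 : 0 ≤ Cd d ω * A^((1:ℝ)/2) :=
        mul_nonneg (Cd_pos d hω).le (Real.rpow_nonneg hA _)
      exact ⟨by linarith, fun _ => hNs⟩
    · set b := A ^ ((1:ℝ)/2) with hbdef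
      have hb : 0 < b := Real.rpow_pos_of_pos hApos _
      have hM := M (1/8) b (by norm_num) le_rfl hb
      have hbb : b*b = A := by
        rw [hbdef, ← Real.rpow_add hApos]; norm_num
      have hterm : 2*A/(b*(((1/8:ℝ)/2)^d*ω)) = 2*16^d/ω * b := by
        rw [← hbb]
        have h16 : ((1/8:ℝ)/2)^d = 1/16^d := by
          rw [show ((1/8:ℝ)/2) = 1/16 by norm_num, div_pow, one_pow]
        rw [h16]
        have h16p : (0:ℝ) < 16^d := by positivity
        field_simp
      rw [hterm] at hM
      have h1s : (1:ℝ) ≤ 8*s := by linarith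
      have hc1 : 2*16^d/ω + 2 ≤ Cd d ω := by unfold Cd; linarith
      have h8 : (8:ℝ) ≤ Cd d ω := by unfold Cd; linarith
      constructor
      · have t1 : 2*16^d/ω*b + 2*b ≤ Cd d ω * b := by
          nlinarith [mul_le_mul_of_nonneg_right hc1 hb.le]
        have t2 : 8*s ≤ Cd d ω * s := by
          nlinarith [mul_le_mul_of_nonneg_right h8 hs.le]
        linarith
      · intro hA1
        have hbs : b ≤ s := by
          rw [hbdef, hsdef]
          apply Real.rpow_le_rpow_of_exponent_ge hApos hA1
          rw [div_le_div_iff₀ hd2 (by norm_num : (0:ℝ) < 2)]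
          have : (0:ℝ) ≤ (d:ℝ) := Nat.cast_nonneg d
          linarith
        have hcoef : 2*16^d/ω + 10 ≤ Cd d ω := by unfold Cd; linarith
        have t1 := mul_le_mul_of_nonneg_left hbs h2
        nlinarith [mul_le_mul_of_nonneg_right hcoef hs.le]

set_option maxHeartbeats 1000000

/-- `L^∞` bound for quantitatively monotone displacements: if
`(u(x)−u(y))·(x−y) ≥ −|x−y|²` for a.e. `x,y ∈ B₁`, then for a.e. `x₀ ∈ B_{3/4}`,
`|u(x₀)| ≤ C(d) (∫_{B₁}|u|²)^{1/(d+2)} + C(d) (∫_{B₁}|u|²)^{1/2}`, and if moreover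
`∫_{B₁}|u|² ≤ 1` then `|u(x₀)| ≤ C(d) (∫_{B₁}|u|²)^{1/(d+2)}`. -/
theorem stmt10 (d : ℕ) (hd : 1 ≤ d) :
    ∃ C : ℝ, 0 < C ∧
      ∀ u : EuclideanSpace ℝ (Fin d) → EuclideanSpace ℝ (Fin d),
        AEMeasurable u →
        Integrable (fun x => ‖u x‖ ^ 2)
          (volume.restrict (Metric.ball (0 : EuclideanSpace ℝ (Fin d)) 1)) →
        (∀ᵐ p : EuclideanSpace ℝ (Fin d) × EuclideanSpace ℝ (Fin d) ∂(volume.prod volume),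
          p.1 ∈ Metric.ball (0 : EuclideanSpace ℝ (Fin d)) 1 →
          p.2 ∈ Metric.ball (0 : EuclideanSpace ℝ (Fin d)) 1 →
          (inner ℝ (u p.1 - u p.2) (p.1 - p.2) : ℝ) ≥ -‖p.1 - p.2‖ ^ 2) →
        ∀ᵐ x₀ ∂volume, x₀ ∈ Metric.ball (0 : EuclideanSpace ℝ (Fin d)) (3/4) →
          (‖u x₀‖ ≤
            C * (∫ x in Metric.ball (0 : EuclideanSpace ℝ (Fin d)) 1, ‖u x‖ ^ 2) ^
                  ((1 : ℝ) / ((d : ℝ) + 2)) +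
            C * (∫ x in Metric.ball (0 : EuclideanSpace ℝ (Fin d)) 1, ‖u x‖ ^ 2) ^
                  ((1 : ℝ) / 2)) ∧
          ((∫ x in Metric.ball (0 : EuclideanSpace ℝ (Fin d)) 1, ‖u x‖ ^ 2) ≤ 1 →
            ‖u x₀‖ ≤
              C * (∫ x in Metric.ball (0 : EuclideanSpace ℝ (Fin d)) 1, ‖u x‖ ^ 2) ^
                    ((1 : ℝ) / ((d : ℝ) + 2))) := by
  set ω := (volume (ball (0 : EuclideanSpace ℝ (Fin d)) 1)).toReal with hωdef
  have hω : 0 < ω :=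
    ENNReal.toReal_pos (measure_ball_pos _ _ one_pos).ne' measure_ball_lt_top.ne
  haveI : Nontrivial (EuclideanSpace ℝ (Fin d)) := by
    haveI : Nonempty (Fin d) := ⟨⟨0, hd⟩⟩
    infer_instance
  refine ⟨Cd d ω, Cd_pos d hω, ?_⟩
  intro u hu hInt h
  have hInt' : IntegrableOn (fun x => ‖u x‖^2) (ball (0 : EuclideanSpace ℝ (Fin d)) 1)
      volume := hInt
  set A := ∫ x in ball (0 : EuclideanSpace ℝ (Fin d)) 1, ‖u x‖^2 with hAdef
  have hA : 0 ≤ A := integral_nonneg fun x => by positivity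
  filter_upwards [Measure.ae_ae_of_ae_prod h] with x₀ hx₀ae hx₀ball
  by_cases hz : u x₀ = 0
  · have r1 : 0 ≤ Cd d ω * A ^ ((1:ℝ)/((d:ℝ)+2)) :=
      mul_nonneg (Cd_pos d hω).le (Real.rpow_nonneg hA _)
    have r2 : 0 ≤ Cd d ω * A ^ ((1:ℝ)/2) :=
      mul_nonneg (Cd_pos d hω).le (Real.rpow_nonneg hA _)
    rw [hz, norm_zero]
    exact ⟨by linarith, fun _ => r1⟩
  · have hx₀n : ‖x₀‖ < 3/4 := mem_ball_zero_iff.1 hx₀ball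
    have hx₀B : x₀ ∈ ball (0 : EuclideanSpace ℝ (Fin d)) 1 :=
      mem_ball_zero_iff.2 (by linarith)
    set u₀ := u x₀ with hu₀def
    have hu₀ : ‖u₀‖ ≠ 0 := norm_ne_zero_iff.2 hz
    set e₁ := ‖u₀‖⁻¹ • u₀ with he₁def
    have he₁ : ‖e₁‖ = 1 := by
      rw [he₁def, norm_smul, norm_inv, norm_norm, inv_mul_cancel₀ hu₀]
    have M : ∀ r ε : ℝ, 0 < r → r ≤ 1/8 → 0 < ε →
        ‖u₀‖ ≤ 2*A/(ε*((r/2)^d*ω)) + 2*ε + 8*r := by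
      intro r ε hr hr8 hε
      set c := x₀ + r • e₁ with hcdef
      set Es := ball c (r/2) with hEsdef
      have hre : ‖r • e₁‖ = r := by
        rw [norm_smul, he₁, Real.norm_eq_abs, abs_of_pos hr, mul_one]
      have hEsub : Es ⊆ ball (0 : EuclideanSpace ℝ (Fin d)) 1 := by
        intro x hx
        rw [hEsdef, mem_ball, dist_eq_norm] at hx
        rw [mem_ball_zero_iff]
        have h1 : ‖x‖ ≤ ‖x - c‖ + ‖c‖ := by
          calc ‖x‖ = ‖(x - c) + c‖ := by rw [sub_add_cancel]
          _ ≤ ‖x - c‖ + ‖c‖ := norm_add_le _ _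
        have h2 : ‖c‖ ≤ ‖x₀‖ + r := by
          calc ‖c‖ ≤ ‖x₀‖ + ‖r • e₁‖ := norm_add_le _ _
          _ = ‖x₀‖ + r := by rw [hre]
        linarith
      have hpt : ∀ᵐ x ∂(volume : Measure (EuclideanSpace ℝ (Fin d))),
          x ∈ Es → ‖u₀‖ ≤ (2/ε)*‖u x‖^2 + (2*ε + 8*r) := by
        filter_upwards [hx₀ae] with x hx hxE
        have h0 := hx hx₀B (hEsub hxE)
        have hle : (inner ℝ u₀ (x - x₀) : ℝ) ≤ inner ℝ (u x) (x - x₀) + ‖x - x₀‖^2 := by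
          rw [ge_iff_le, inner_sub_left] at h0
          rw [show x₀ - x = -(x - x₀) from by abel] at h0
          rw [inner_neg_right, inner_neg_right, norm_neg] at h0
          linarith
        have hxc : ‖x - c‖ ≤ r/2 := by
          rw [hEsdef, mem_ball, dist_eq_norm] at hxE
          exact hxE.le
        have hxsplit : x - x₀ = (x - c) + r • e₁ := by
          rw [hcdef]; abel
        have hxx₀ : ‖x - x₀‖ ≤ 3*r/2 := by
          rw [hxsplit]
          calc ‖(x - c) + r • e₁‖ ≤ ‖x - c‖ + ‖r • e₁‖ := norm_add_le _ _
          _ ≤ r/2 + r := by rw [hre]; linarith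
          _ ≤ 3*r/2 := by linarith
        have hinner_e : (inner ℝ u₀ e₁ : ℝ) = ‖u₀‖ := by
          rw [he₁def, real_inner_smul_right, real_inner_self_eq_norm_sq, sq,
            inv_mul_cancel_left₀ hu₀]
        have hlow : r/2*‖u₀‖ ≤ (inner ℝ u₀ (x - x₀) : ℝ) := by
          rw [hxsplit, inner_add_right, real_inner_smul_right, hinner_e]
          have habs : |(inner ℝ u₀ (x - c) : ℝ)| ≤ ‖u₀‖ * ‖x - c‖ :=
            abs_real_inner_le_norm _ _
          have h3 : ‖u₀‖ * ‖x - c‖ ≤ ‖u₀‖ * (r/2) :=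
            mul_le_mul_of_nonneg_left hxc (norm_nonneg _)
          have h4 := neg_abs_le (inner ℝ u₀ (x - c) : ℝ)
          linarith
        have hup : (inner ℝ (u x) (x - x₀) : ℝ) ≤ ‖u x‖*(3*r/2) :=
          (real_inner_le_norm _ _).trans
            (mul_le_mul_of_nonneg_left hxx₀ (norm_nonneg _))
        have hsq : ‖x - x₀‖^2 ≤ (3*r/2)^2 := by
          nlinarith [norm_nonneg (x - x₀)]
        have step1 : ‖u₀‖ ≤ 3*‖u x‖ + 8*r := by
          nlinarith [mul_pos hr hr]
        have amgm : 3*‖u x‖ ≤ (2/ε)*‖u x‖^2 + 2*ε := by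
          rw [← sub_nonneg]
          have heq : (2/ε)*‖u x‖^2 + 2*ε - 3*‖u x‖
              = (2*‖u x‖^2 + 2*ε^2 - 3*‖u x‖*ε)/ε := by
            field_simp
          rw [heq]
          apply div_nonneg _ hε.le
          nlinarith [sq_nonneg (‖u x‖ - ε), sq_nonneg (‖u x‖ - 2*ε),
            sq_nonneg (2*‖u x‖ - ε)]
        linarith
      have hmE : (volume Es).toReal = (r/2)^d * ω := by
        rw [hEsdef, Measure.addHaar_ball volume c (by linarith : (0:ℝ) ≤ r/2),
          ENNReal.toReal_mul, ENNReal.toReal_ofReal (by positivity),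
          finrank_euclideanSpace_fin, hωdef]
      have hIntE : IntegrableOn (fun x => ‖u x‖^2) Es volume := hInt'.mono_set hEsub
      have hEfin : volume Es < ⊤ := measure_ball_lt_top
      have hconst : IntegrableOn (fun _ => (2*ε + 8*r)) Es volume :=
        integrableOn_const hEfin.ne
      have hconst2 : IntegrableOn (fun _ => ‖u₀‖) Es volume :=
        integrableOn_const hEfin.ne
      have hg : IntegrableOn (fun x => (2/ε)*‖u x‖^2 + (2*ε + 8*r)) Es volume :=
        (hIntE.const_mul _).add hconst
      have hle' : (fun _ => ‖u₀‖) ≤ᵐ[volume.restrict Es]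
          (fun x => (2/ε)*‖u x‖^2 + (2*ε + 8*r)) :=
        (ae_restrict_iff' measurableSet_ball).2 hpt
      have hmono := integral_mono_ae hconst2 hg hle'
      rw [setIntegral_const,
        integral_add (hIntE.const_mul _) hconst, integral_const_mul,
        setIntegral_const, smul_eq_mul, smul_eq_mul, measureReal_def, hmE] at hmono
      have hTA : ∫ x in Es, ‖u x‖^2 ≤ A := by
        rw [hAdef]
        exact setIntegral_mono_set hInt'
          (Filter.Eventually.of_forall fun x => by positivity)
          (HasSubset.Subset.eventuallyLE hEsub)
      have hm : 0 < (r/2)^d*ω := by positivity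
      have h2ε : (0:ℝ) ≤ 2/ε := by positivity
      have hTA' : (2/ε) * (∫ x in Es, ‖u x‖^2) ≤ (2/ε)*A :=
        mul_le_mul_of_nonneg_left hTA h2ε
      have key : ((r/2)^d*ω) * ‖u₀‖ ≤ (2/ε)*A + (2*ε+8*r)*((r/2)^d*ω) := by
        nlinarith
      rw [show 2*A/(ε*((r/2)^d*ω)) = ((2/ε)*A)/((r/2)^d*ω) from by
        field_simp]
      have hfin : ‖u₀‖ - (2*ε+8*r) ≤ ((2/ε)*A)/((r/2)^d*ω) := by
        rw [le_div_iff₀ hm]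
        nlinarith
      linarith
    exact choice_lemma d hd hω hA (norm_nonneg _) M
end
end

section
/- Concavity consequence of det^{1/d}: for every symmetric positive semidefinite d×d matrix A and every t ∈ [0,1], det(t A + (1−t) Id) ≥ (det A)^t. -/
/-- Concavity consequence of `det^{1/d}`: for a symmetric positive semidefinite real
`d×d` matrix `A` and `t ∈ [0,1]`, `det(tA + (1−t)Id) ≥ (det A)^t`. -/
theorem stmt12 (d : ℕ) (A : Matrix (Fin d) (Fin d) ℝ) (hA : A.PosSemidef)
    (t : ℝ) (ht : t ∈ Set.Icc (0:ℝ) 1) :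
    (t • A + (1 - t) • (1 : Matrix (Fin d) (Fin d) ℝ)).det ≥ A.det ^ t := by
  obtain ⟨ht0, ht1⟩ := ht
  have hH := hA.1
  set U : Matrix (Fin d) (Fin d) ℝ := (hH.eigenvectorUnitary : Matrix (Fin d) (Fin d) ℝ) with hU
  have hUU : U * star U = 1 := (Matrix.mem_unitaryGroup_iff).mp hH.eigenvectorUnitary.2
  set D : Matrix (Fin d) (Fin d) ℝ := Matrix.diagonal (RCLike.ofReal ∘ hH.eigenvalues) with hD
  have key : t • A + (1 - t) • (1 : Matrix (Fin d) (Fin d) ℝ)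
      = U * (t • D + (1 - t) • 1) * star U := by
    rw [Matrix.mul_add, Matrix.add_mul, Matrix.mul_smul, Matrix.mul_smul,
      Matrix.smul_mul, Matrix.smul_mul, Matrix.mul_one, hUU, hU, hD, ← Unitary.conjStarAlgAut_apply (S := ℝ), ← hH.spectral_theorem]
  rw [key, Matrix.det_mul, Matrix.det_mul]
  have hdetU : U.det * (star U).det = 1 := by
    rw [← Matrix.det_mul, hUU, Matrix.det_one]
  have hdiag : t • D + (1 - t) • (1 : Matrix (Fin d) (Fin d) ℝ)
      = Matrix.diagonal (fun i => t * hH.eigenvalues i + (1 - t)) := by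
    ext i j
    rcases eq_or_ne i j with rfl | h
    · simp [hD, Matrix.one_apply_eq, mul_comm]
    · simp [hD, Matrix.diagonal_apply_ne _ h, Matrix.one_apply_ne h]
  have hAMGM : ∀ i, hH.eigenvalues i ^ t ≤ t * hH.eigenvalues i + (1 - t) := by
    intro i
    have h2 := Real.geom_mean_le_arith_mean2_weighted ht0 (by linarith : (0:ℝ) ≤ 1 - t)
      (hA.eigenvalues_nonneg i) zero_le_one (by ring)
    rwa [Real.one_rpow, mul_one, mul_one] at h2
  calc A.det ^ t = (∏ i, hH.eigenvalues i) ^ t := by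
        rw [hH.det_eq_prod_eigenvalues]; norm_num
    _ = ∏ i, (hH.eigenvalues i) ^ t := by
        rw [← Real.finset_prod_rpow _ _ (fun i _ => hA.eigenvalues_nonneg i)]
    _ ≤ ∏ i, (t * hH.eigenvalues i + (1 - t)) := by
        apply Finset.prod_le_prod
        · intro i _; exact Real.rpow_nonneg (hA.eigenvalues_nonneg i) t
        · intro i _; exact hAMGM i
    _ = (t • D + (1 - t) • (1 : Matrix (Fin d) (Fin d) ℝ)).det := by
        rw [hdiag, Matrix.det_diagonal]
    _ = U.det * (t • D + (1 - t) • 1).det * (star U).det := by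
        rw [mul_right_comm, hdetU, one_mul]
end
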